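/- arXiv:math/0607667 — 2 statements merged into one kernel-verified Lean document; each statement's English description precedes it below -/
import Mathlib

section
/- For fixed t > 0 and x, y ∈ ℝ³ \ {0}, the map α ↦ p_t^α(x,y) is (weakly) decreasing on ℝ. -/
open Real MeasureTheory Filter

noncomputable def pt (t r : ℝ) : ℝ := (4 * π * t) ^ (-(3 : ℝ) / 2) * Real.exp (-r ^ 2 / (4 * t))

noncomputable def pA (α t : ℝ) (x y : EuclideanSpace ℝ (Fin 3)) : ℝ :=
  (4 * π * t) ^ (-(3 : ℝ) / 2) * Real.exp (-‖y - x‖ ^ 2 / (4 * t)) +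
    (2 * t / (‖x‖ * ‖y‖)) * pt t (‖x‖ + ‖y‖) -
    (8 * π * α * t / (‖x‖ * ‖y‖)) *
      ∫ u in Set.Ioi (0 : ℝ), Real.exp (-(4 * π * α * u)) * pt t (u + ‖x‖ + ‖y‖)

/-- Integrability of a Gaussian with a linear twist. -/
lemma aux_int (t a c : ℝ) (ht : 0 < t) :
    Integrable (fun u : ℝ => Real.exp (a * u - (u + c) ^ 2 / (4 * t))) := by
  have key : ∀ u : ℝ, a * u - (u + c) ^ 2 / (4 * t)
      = -(1 / (4 * t)) * (u - (2 * t * a - c)) ^ 2 + ((2 * t * a - c) ^ 2 - c ^ 2) / (4 * t) := by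
    intro u
    field_simp
    ring
  simp only [key, Real.exp_add]
  exact ((integrable_exp_neg_mul_sq (by positivity)).comp_sub_right (2 * t * a - c)).mul_const _

/-- Integrability of the Gaussian with a linear prefactor. -/
lemma aux_int2 (t a c : ℝ) (ht : 0 < t) :
    Integrable (fun u : ℝ => (u + c) / (2 * t) * Real.exp (a * u - (u + c) ^ 2 / (4 * t))) := by
  set e : ℝ := 2 * t * a - c with he
  have key : ∀ u : ℝ, a * u - (u + c) ^ 2 / (4 * t)
      = -(1 / (4 * t)) * (u - e) ^ 2 + (e ^ 2 - c ^ 2) / (4 * t) := by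
    intro u
    rw [he]
    field_simp
    ring
  have h1 : Integrable (fun u : ℝ => (u - e) * Real.exp (-(1 / (4 * t)) * (u - e) ^ 2)) :=
    (integrable_mul_exp_neg_mul_sq (by positivity)).comp_sub_right e
  have h2 : Integrable (fun u : ℝ => Real.exp (-(1 / (4 * t)) * (u - e) ^ 2)) :=
    (integrable_exp_neg_mul_sq (by positivity)).comp_sub_right e
  have h3 := ((h1.add (h2.const_mul (e + c))).mul_const
      (Real.exp ((e ^ 2 - c ^ 2) / (4 * t)))).const_mul (1 / (2 * t))
  refine h3.congr (Filter.Eventually.of_forall fun u => ?_)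
  simp only [Pi.add_apply]
  rw [key u, Real.exp_add]
  ring

/-- The key integration-by-parts identity. -/
lemma key_eq (t c : ℝ) (ht : 0 < t) (s : ℝ) :
    (4 * π * s) * ∫ u in Set.Ioi (0 : ℝ), Real.exp (-(4 * π * s) * u - (u + c) ^ 2 / (4 * t))
      = Real.exp (-c ^ 2 / (4 * t))
        - ∫ u in Set.Ioi (0 : ℝ),
            (u + c) / (2 * t) * Real.exp (-(4 * π * s) * u - (u + c) ^ 2 / (4 * t)) := by
  set a : ℝ := -(4 * π * s) with ha
  set f : ℝ → ℝ := fun u => Real.exp (a * u - (u + c) ^ 2 / (4 * t)) with hf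
  set f' : ℝ → ℝ := fun u => (a - (u + c) / (2 * t)) * Real.exp (a * u - (u + c) ^ 2 / (4 * t))
    with hf'
  have hderiv : ∀ u ∈ Set.Ici (0 : ℝ), HasDerivAt f (f' u) u := by
    intro u _
    have hq : HasDerivAt (fun u : ℝ => a * u - (u + c) ^ 2 / (4 * t))
        (a - (u + c) / (2 * t)) u := by
      have h1 : HasDerivAt (fun u : ℝ => a * u) a u := by
        simpa using (hasDerivAt_id u).const_mul a
      have h2 : HasDerivAt (fun u : ℝ => (u + c) ^ 2 / (4 * t))
          (2 * (u + c) ^ 1 * 1 / (4 * t)) u :=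
        (((hasDerivAt_id u).add_const c).pow 2).div_const (4 * t)
      have := h1.sub h2
      exact this.congr_deriv (by ring)
    simpa [hf, hf', mul_comm] using hq.exp
  have e_key : ∀ u : ℝ, a * u - (u + c) ^ 2 / (4 * t)
      = -(1 / (4 * t)) * (u - (2 * t * a - c)) ^ 2 + ((2 * t * a - c) ^ 2 - c ^ 2) / (4 * t) := by
    intro u
    field_simp
    ring
  have htend : Tendsto f atTop (nhds 0) := by
    have hq : Tendsto (fun u : ℝ => a * u - (u + c) ^ 2 / (4 * t)) atTop atBot := by
      simp only [e_key]
      apply tendsto_atBot_add_const_right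
      rw [tendsto_const_mul_atBot_of_neg (neg_lt_zero.mpr (by positivity : (0:ℝ) < 1 / (4 * t)))]
      have h0 := (tendsto_pow_atTop (two_ne_zero)).comp
        (tendsto_atTop_add_const_right atTop (-(2 * t * a - c)) (tendsto_id (α := ℝ)))
      simpa [sub_eq_add_neg, Function.comp_def] using h0
    exact Real.tendsto_exp_atBot.comp hq
  have hint1 : Integrable (fun u : ℝ => Real.exp (a * u - (u + c) ^ 2 / (4 * t))) :=
    aux_int t a c ht
  have hint2 : Integrable
      (fun u : ℝ => (u + c) / (2 * t) * Real.exp (a * u - (u + c) ^ 2 / (4 * t))) :=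
    aux_int2 t a c ht
  have hint' : IntegrableOn f' (Set.Ioi (0 : ℝ)) := by
    have : Integrable f' := by
      have := (hint1.const_mul a).sub hint2
      refine this.congr (Filter.Eventually.of_forall fun u => ?_)
      simp only [Pi.sub_apply, hf']
      ring
    exact this.integrableOn
  have hFTC := integral_Ioi_of_hasDerivAt_of_tendsto' hderiv hint' htend
  have hsplit : ∫ u in Set.Ioi (0 : ℝ), f' u
      = a * (∫ u in Set.Ioi (0 : ℝ), Real.exp (a * u - (u + c) ^ 2 / (4 * t)))
        - ∫ u in Set.Ioi (0 : ℝ),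
            (u + c) / (2 * t) * Real.exp (a * u - (u + c) ^ 2 / (4 * t)) := by
    rw [← MeasureTheory.integral_const_mul _ _,
      ← MeasureTheory.integral_sub ((hint1.const_mul a).integrableOn) hint2.integrableOn]
    refine MeasureTheory.setIntegral_congr_fun measurableSet_Ioi fun u _ => ?_
    simp only [hf']
    ring
  rw [hsplit] at hFTC
  have hf0 : f 0 = Real.exp (-c ^ 2 / (4 * t)) := by
    simp [hf]
    ring_nf
  rw [hf0] at hFTC
  have : (4 * π * s) = -a := by rw [ha]; ring
  rw [this]
  linarith [hFTC]

lemma key_mono (t c : ℝ) (ht : 0 < t) (hc : 0 < c) {α β : ℝ} (hαβ : α ≤ β) :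
    (4 * π * α) * ∫ u in Set.Ioi (0 : ℝ), Real.exp (-(4 * π * α) * u - (u + c) ^ 2 / (4 * t))
      ≤ (4 * π * β) * ∫ u in Set.Ioi (0 : ℝ),
          Real.exp (-(4 * π * β) * u - (u + c) ^ 2 / (4 * t)) := by
  rw [key_eq t c ht α, key_eq t c ht β]
  have hJ : (∫ u in Set.Ioi (0 : ℝ),
        (u + c) / (2 * t) * Real.exp (-(4 * π * β) * u - (u + c) ^ 2 / (4 * t)))
      ≤ ∫ u in Set.Ioi (0 : ℝ),
        (u + c) / (2 * t) * Real.exp (-(4 * π * α) * u - (u + c) ^ 2 / (4 * t)) := by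
    refine MeasureTheory.setIntegral_mono_on (aux_int2 t _ c ht).integrableOn
      (aux_int2 t _ c ht).integrableOn measurableSet_Ioi fun u hu => ?_
    have hu0 : 0 < u := hu
    have hfac : 0 ≤ (u + c) / (2 * t) := by positivity
    refine mul_le_mul_of_nonneg_left (Real.exp_le_exp.mpr ?_) hfac
    have : -(4 * π * β) * u ≤ -(4 * π * α) * u := by
      have := mul_le_mul_of_nonneg_right hαβ hu0.le
      nlinarith [Real.pi_pos]
    linarith
  linarith

/-- `α ↦ p_t^α(x,y)` is weakly decreasing on `ℝ`. -/
theorem pA_antitone (t : ℝ) (ht : 0 < t)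
    (x y : EuclideanSpace ℝ (Fin 3)) (hx : x ≠ 0) (hy : y ≠ 0) :
    Antitone (fun α : ℝ => pA α t x y) := by
  intro α β hαβ
  simp only [pA]
  apply sub_le_sub_left
  set c : ℝ := ‖x‖ + ‖y‖ with hcdef
  have hc : 0 < c := by
    have h1 : 0 < ‖x‖ := norm_pos_iff.mpr hx
    have h2 : 0 < ‖y‖ := norm_pos_iff.mpr hy
    positivity
  set C : ℝ := (4 * π * t) ^ (-(3 : ℝ) / 2) with hCdef
  have hC : 0 < C := by
    have : 0 < 4 * π * t := by positivity
    exact Real.rpow_pos_of_pos this _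
  have hm : 0 < ‖x‖ * ‖y‖ := by
    have h1 : 0 < ‖x‖ := norm_pos_iff.mpr hx
    have h2 : 0 < ‖y‖ := norm_pos_iff.mpr hy
    positivity
  have hrw : ∀ s : ℝ,
      (∫ u in Set.Ioi (0 : ℝ), Real.exp (-(4 * π * s * u)) * pt t (u + ‖x‖ + ‖y‖))
        = C * ∫ u in Set.Ioi (0 : ℝ), Real.exp (-(4 * π * s) * u - (u + c) ^ 2 / (4 * t)) := by
    intro s
    rw [← MeasureTheory.integral_const_mul]
    refine MeasureTheory.setIntegral_congr_fun measurableSet_Ioi fun u _ => ?_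
    simp only [pt, ← hCdef]
    rw [mul_comm (Real.exp (-(4 * π * s * u))), mul_assoc, ← Real.exp_add]
    congr 2
    rw [hcdef]
    ring
  rw [hrw α, hrw β]
  have hkey := key_mono t c ht hc hαβ
  have hconst : 0 ≤ 2 * t * C / (‖x‖ * ‖y‖) := by positivity
  calc 8 * π * α * t / (‖x‖ * ‖y‖)
        * (C * ∫ u in Set.Ioi (0 : ℝ), Real.exp (-(4 * π * α) * u - (u + c) ^ 2 / (4 * t)))
      = (2 * t * C / (‖x‖ * ‖y‖)) * ((4 * π * α)
        * ∫ u in Set.Ioi (0 : ℝ), Real.exp (-(4 * π * α) * u - (u + c) ^ 2 / (4 * t))) := by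
        ring
    _ ≤ (2 * t * C / (‖x‖ * ‖y‖)) * ((4 * π * β)
        * ∫ u in Set.Ioi (0 : ℝ), Real.exp (-(4 * π * β) * u - (u + c) ^ 2 / (4 * t))) :=
        mul_le_mul_of_nonneg_left hkey hconst
    _ = 8 * π * β * t / (‖x‖ * ‖y‖)
        * (C * ∫ u in Set.Ioi (0 : ℝ), Real.exp (-(4 * π * β) * u - (u + c) ^ 2 / (4 * t))) := by
        ring
end

section
/- For fixed t > 0 and x, y ∈ ℝ³ \ {0}, p_t^α(x,y) tends to +∞ as α → −∞. -/
open Real MeasureTheory Filter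

lemma pt_pos (t r : ℝ) (ht : 0 < t) : 0 < pt t r := by
  unfold pt
  have h1 : (0:ℝ) < 4 * π * t := by positivity
  positivity

lemma key_int (t : ℝ) (ht : 0 < t) (a c : ℝ) :
    IntegrableOn (fun u => Real.exp (a * u) * pt t (u + c)) (Set.Ioi (0:ℝ)) := by
  have h4t : (0:ℝ) < 1 / (4 * t) := by positivity
  set D := (4 * π * t) ^ (-(3:ℝ)/2) with hD
  set c' := c - 2 * t * a with hc'
  have base : Integrable (fun u : ℝ =>
      D * Real.exp ((c' ^ 2 - c ^ 2) / (4 * t)) * Real.exp (-(1/(4*t)) * (u + c') ^ 2)) := by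
    exact ((integrable_exp_neg_mul_sq h4t).comp_add_right c').const_mul _
  have heq : (fun u : ℝ => Real.exp (a * u) * pt t (u + c)) =
      (fun u : ℝ => D * Real.exp ((c' ^ 2 - c ^ 2) / (4 * t)) *
        Real.exp (-(1/(4*t)) * (u + c') ^ 2)) := by
    funext u
    unfold pt
    rw [← hD, mul_comm (Real.exp (a * u)), mul_assoc, mul_assoc, ← Real.exp_add, ← Real.exp_add]
    congr 1
    have ht' : t ≠ 0 := ne_of_gt ht
    rw [hc']
    field_simp
    ring_nf
  rw [heq]
  exact base.integrableOn

/-- As `α → −∞`, `p_t^α(x,y)` tends to `+∞`. -/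
theorem pA_tendsto_atBot (t : ℝ) (ht : 0 < t)
    (x y : EuclideanSpace ℝ (Fin 3)) (hx : x ≠ 0) (hy : y ≠ 0) :
    Tendsto (fun α : ℝ => pA α t x y) atBot atTop := by
  have hx' : 0 < ‖x‖ := norm_pos_iff.mpr hx
  have hy' : 0 < ‖y‖ := norm_pos_iff.mpr hy
  set c : ℝ := ‖x‖ + ‖y‖ with hc
  set K : ℝ := 8 * π * t / (‖x‖ * ‖y‖) with hKdef
  have hKpos : 0 < K := by rw [hKdef]; positivity
  set A : ℝ := (4 * π * t) ^ (-(3:ℝ)/2) * Real.exp (-‖y - x‖ ^ 2 / (4 * t)) +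
      (2 * t / (‖x‖ * ‖y‖)) * pt t (‖x‖ + ‖y‖) with hA
  set I0 : ℝ := ∫ u in Set.Ioi (0:ℝ), pt t (u + c) with hI0
  have hI0int : IntegrableOn (fun u => pt t (u + c)) (Set.Ioi (0:ℝ)) := by
    have h := key_int t ht 0 c
    simpa using h
  have hI0pos : 0 < I0 := by
    rw [hI0, setIntegral_pos_iff_support_of_nonneg_ae
      (Filter.Eventually.of_forall fun u => (pt_pos t (u + c) ht).le) hI0int]
    have : (Function.support fun u : ℝ => pt t (u + c)) = Set.univ := by
      ext u; simp [Function.mem_support, (pt_pos t (u + c) ht).ne']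
    rw [this, Set.univ_inter]
    simp [Real.volume_Ioi]
  have hg : Tendsto (fun α : ℝ => A + (-α) * (K * I0)) atBot atTop := by
    apply tendsto_atTop_add_const_left
    exact tendsto_neg_atBot_atTop.atTop_mul_const (by positivity)
  refine tendsto_atTop_mono' atBot ?_ hg
  filter_upwards [eventually_le_atBot (0:ℝ)] with α hα
  have hIα : IntegrableOn (fun u => Real.exp (-(4 * π * α * u)) * pt t (u + c))
      (Set.Ioi (0:ℝ)) := by
    have h := key_int t ht (-(4 * π * α)) c
    simpa [mul_assoc, neg_mul] using h
  have hmono : I0 ≤ ∫ u in Set.Ioi (0:ℝ), Real.exp (-(4 * π * α * u)) * pt t (u + c) := by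
    rw [hI0]
    apply setIntegral_mono_on hI0int hIα measurableSet_Ioi
    intro u hu
    have hu' : (0:ℝ) < u := hu
    have hexp : (1:ℝ) ≤ Real.exp (-(4 * π * α * u)) := by
      apply Real.one_le_exp
      have : 4 * π * α * u ≤ 0 := by
        have h1 : 0 ≤ 4 * π * (-α) * u :=
          mul_nonneg (mul_nonneg (by positivity) (by linarith)) hu'.le
        nlinarith [h1]
      linarith
    nlinarith [pt_pos t (u + c) ht]
  unfold pA
  rw [← hA]
  have hrw : (∫ u in Set.Ioi (0:ℝ), Real.exp (-(4 * π * α * u)) * pt t (u + ‖x‖ + ‖y‖)) =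
      ∫ u in Set.Ioi (0:ℝ), Real.exp (-(4 * π * α * u)) * pt t (u + c) := by
    simp only [hc, add_assoc]
  rw [hrw]
  set J : ℝ := ∫ u in Set.Ioi (0:ℝ), Real.exp (-(4 * π * α * u)) * pt t (u + c) with hJ
  have hcoef : 8 * π * α * t / (‖x‖ * ‖y‖) = α * K := by
    rw [hKdef]; field_simp
  rw [hcoef]
  have h1 : (-α) * (K * I0) ≤ (-α) * (K * J) := by
    apply mul_le_mul_of_nonneg_left _ (by linarith)
    exact mul_le_mul_of_nonneg_left hmono hKpos.le
  linarith [h1]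
end
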